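/- Let (πₐ)_{a ≥ 1} be finite reward sequences (blocks) such that the average reward of block πₐ is greater than r − 1/a for every a, and all rewards lie in a bounded interval [−M, M]. Then there exist repetition counts b₁, b₂, ... ∈ ℕ such that the infinite concatenation π₁^{b₁} π₂^{b₂} π₃^{b₃} ... has mean payoff (liminf of running averages) at least r. -/

import Mathlib

open Filter Finset

/-- The infinite sequence obtained by concatenating, for each `a = 0, 1, 2, …`,
`b a` copies of the finite block `π a`. (When each block is nonempty and each
repetition count is positive, the prefix of the first `i + 1` blocks has length
`> i`, so position `i` is well defined; `getD … 0` is the value there.) -/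
noncomputable def concatSeq (π : ℕ → List ℝ) (b : ℕ → ℕ) (i : ℕ) : ℝ :=
  (((List.range (i + 1)).map (fun a => (List.replicate (b a) (π a)).flatten)).flatten).getD i 0


lemma list_sum_ge (M : ℝ) (l : List ℝ) (h : ∀ x ∈ l, |x| ≤ M) :
    -(M * l.length) ≤ l.sum := by
  induction l with
  | nil => simp
  | cons x t ih =>
    simp only [List.sum_cons, List.length_cons]
    have hx := h x (by simp)
    have ht := ih (fun y hy => h y (by simp [hy]))
    have : -M ≤ x := by cases abs_le.mp hx; linarith
    push_cast
    nlinarith [ht]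

lemma sum_range_getD (l : List ℝ) : ∀ n, n ≤ l.length →
    ∑ i ∈ Finset.range n, l.getD i 0 = (l.take n).sum := by
  intro n
  induction n with
  | zero => simp
  | succ k ih =>
    intro hk
    have hkl : k < l.length := hk
    rw [Finset.sum_range_succ, ih (le_of_lt (Nat.lt_of_succ_le hk)), List.take_succ,
      List.sum_append]
    simp [List.getElem?_eq_getElem hkl, List.getD_eq_getElem l 0 hkl]

lemma take_rep_sum (u : List ℝ) (M α : ℝ) (hM0 : 0 ≤ M)
    (hM : ∀ x ∈ u, |x| ≤ M) (hα : α * u.length ≤ u.sum) :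
    ∀ c m, m ≤ c * u.length →
      α * m - (M + |α|) * u.length ≤ (((List.replicate c u).flatten).take m).sum := by
  intro c
  induction c with
  | zero =>
    intro m hm
    simp only [Nat.zero_mul, Nat.le_zero] at hm
    subst hm
    simp only [List.replicate_zero, List.flatten_nil, List.take_nil, List.sum_nil]
    have : (0:ℝ) ≤ (M + |α|) * u.length := by positivity
    push_cast; linarith
  | succ c ih =>
    intro m hm
    rw [List.replicate_succ, List.flatten_cons, List.take_append,
      List.sum_append]
    by_cases hcase : m ≤ u.length
    · have h0 : m - u.length = 0 := Nat.sub_eq_zero_of_le hcase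
      rw [h0]
      simp only [List.take_zero, List.sum_nil, add_zero]
      have hlen : (u.take m).length = m := List.length_take_of_le hcase
      have h1 : -(M * m) ≤ (u.take m).sum := by
        have := list_sum_ge M (u.take m) (fun x hx => hM x (List.take_subset m u hx))
        rwa [hlen] at this
      have h2 : α * m ≤ |α| * u.length := by
        calc α * m ≤ |α| * m := mul_le_mul_of_nonneg_right (le_abs_self α) (by positivity)
        _ ≤ |α| * u.length := by
            apply mul_le_mul_of_nonneg_left _ (abs_nonneg α)
            exact_mod_cast hcase
      have h3 : M * m ≤ M * u.length := by
        apply mul_le_mul_of_nonneg_left _ hM0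
        exact_mod_cast hcase
      nlinarith
    · push_neg at hcase
      have hm' : m - u.length ≤ c * u.length := by
        rw [Nat.succ_mul] at hm; omega
      have := ih (m - u.length) hm'
      rw [List.take_of_length_le (le_of_lt hcase)]
      have hcast : ((m - u.length : ℕ) : ℝ) = (m : ℝ) - u.length := by
        push_cast [Nat.cast_sub (le_of_lt hcase)]; ring
      rw [hcast] at this
      nlinarith



lemma list_map_range_sum {M : Type*} [AddCommMonoid M] (f : ℕ → M) (n : ℕ) :
    ((List.range n).map f).sum = ∑ k ∈ Finset.range n, f k := by
  induction n with
  | zero => simp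
  | succ k ih => rw [List.range_succ, List.map_append, List.sum_append,
      Finset.sum_range_succ, ih]; simp

namespace MeanPayoffAux

variable (q : ℕ → List ℝ) (c : ℕ → ℕ)

def Fb (a : ℕ) : List ℝ := (List.replicate (c a) (q a)).flatten

def Pp (n : ℕ) : List ℝ := ((List.range n).map (Fb q c)).flatten

lemma Pp_succ (a : ℕ) : Pp q c (a + 1) = Pp q c a ++ Fb q c a := by
  simp [Pp, List.range_succ]

lemma Fb_length (a : ℕ) : (Fb q c a).length = c a * (q a).length := by
  simp [Fb, List.length_flatten, Function.comp]

lemma Fb_sum (a : ℕ) : (Fb q c a).sum = (c a : ℝ) * (q a).sum := by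
  simp [Fb, List.sum_flatten, List.map_replicate, List.sum_replicate, nsmul_eq_mul]

lemma Pp_length (n : ℕ) : (Pp q c n).length = ∑ k ∈ Finset.range n, c k * (q k).length := by
  simp only [Pp, List.length_flatten, List.map_map]
  rw [show (List.length ∘ Fb q c) = fun k => c k * (q k).length from funext (Fb_length q c)]
  exact list_map_range_sum _ n

lemma Pp_sum (n : ℕ) : (Pp q c n).sum = ∑ k ∈ Finset.range n, (c k : ℝ) * (q k).sum := by
  simp only [Pp, List.sum_flatten, List.map_map]
  rw [show (List.sum ∘ Fb q c) = fun k => (c k : ℝ) * (q k).sum from funext (Fb_sum q c)]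
  exact list_map_range_sum _ n

lemma Pp_prefix {m n : ℕ} (h : m ≤ n) : Pp q c m <+: Pp q c n := by
  induction n with
  | zero => simp_all
  | succ k ih =>
    rcases Nat.lt_or_ge m (k+1) with h' | h'
    · exact (ih (by omega)).trans (by rw [Pp_succ]; exact List.prefix_append _ _)
    · have : m = k + 1 := by omega
      subst this; exact List.prefix_refl _

variable (hq : ∀ a, 1 ≤ (q a).length) (hc : ∀ a, 1 ≤ c a)

include hq hc in
lemma le_Pp_length (n : ℕ) : n ≤ (Pp q c n).length := by
  rw [Pp_length]
  calc n = ∑ _k ∈ Finset.range n, 1 := by simp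
  _ ≤ _ := Finset.sum_le_sum fun k _ => Nat.one_le_iff_ne_zero.mpr
      (by have := hq k; have := hc k; positivity)

include hq hc in
lemma getD_eq_concatSeq {i j : ℕ} (hij : i < (Pp q c j).length) :
    (Pp q c j).getD i 0 = concatSeq q c i := by
  have hlen : i < (Pp q c (i+1)).length := lt_of_lt_of_le (Nat.lt_succ_self i)
    (le_Pp_length q c hq hc (i+1))
  have hconcat : concatSeq q c i = (Pp q c (i+1)).getD i 0 := rfl
  rcases le_total j (i+1) with h | h
  · obtain ⟨t, ht⟩ := Pp_prefix q c h
    rw [hconcat, ← ht, List.getD_append _ _ _ _ hij]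
  · obtain ⟨t, ht⟩ := Pp_prefix q c h
    rw [hconcat, ← ht, List.getD_append _ _ _ _ hlen]

include hq hc in
lemma sum_concat {n j : ℕ} (hnj : n ≤ (Pp q c j).length) :
    ∑ i ∈ Finset.range n, concatSeq q c i = ((Pp q c j).take n).sum := by
  have h1 : ∀ n' : ℕ, n' ≤ (Pp q c j).length →
      ∑ i ∈ Finset.range n', (Pp q c j).getD i 0 = ((Pp q c j).take n').sum := by
    intro n'
    induction n' with
    | zero => simp
    | succ k ih =>
      intro hk
      have hkl : k < (Pp q c j).length := hk
      rw [Finset.sum_range_succ, ih (le_of_lt (Nat.lt_of_succ_le hk)), List.take_succ,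
        List.sum_append]
      simp [List.getElem?_eq_getElem hkl, List.getD_eq_getElem _ 0 hkl]
  rw [← h1 n hnj]
  exact Finset.sum_congr rfl fun i hi => (getD_eq_concatSeq q c hq hc
    (lt_of_lt_of_le (Finset.mem_range.mp hi) hnj)).symm

end MeanPayoffAux


def Dlen (L : ℕ → ℕ) (Kc : ℕ) : ℕ → ℕ
  | 0 => 0
  | a + 1 => Dlen L Kc a + ((a + 2) * (Dlen L Kc a + Kc * L (a + 1) + 1)) * L a

def crep (L : ℕ → ℕ) (Kc : ℕ) (a : ℕ) : ℕ :=
  (a + 2) * (Dlen L Kc a + Kc * L (a + 1) + 1)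

lemma Dlen_succ (L : ℕ → ℕ) (Kc a : ℕ) :
    Dlen L Kc (a + 1) = Dlen L Kc a + crep L Kc a * L a := rfl

lemma crep_pos (L : ℕ → ℕ) (Kc a : ℕ) : 1 ≤ crep L Kc a := by
  unfold crep
  exact Nat.one_le_iff_ne_zero.mpr (by positivity)

lemma Dlen_eq_sum (L : ℕ → ℕ) (Kc : ℕ) (a : ℕ) :
    Dlen L Kc a = ∑ k ∈ Finset.range a, crep L Kc k * L k := by
  induction a with
  | zero => rfl
  | succ k ih => rw [Dlen_succ, Finset.sum_range_succ, ih]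

lemma Dlen_mono (L : ℕ → ℕ) (Kc : ℕ) : Monotone (Dlen L Kc) :=
  monotone_nat_of_le_succ fun a => by rw [Dlen_succ]; omega

lemma le_Dlen (L : ℕ → ℕ) (Kc : ℕ) (hL : ∀ a, 1 ≤ L a) (a : ℕ) : a ≤ Dlen L Kc a := by
  induction a with
  | zero => simp
  | succ k ih =>
    have h1 := crep_pos L Kc k
    have h2 := hL k
    have : 1 ≤ crep L Kc k * L k := Nat.one_le_iff_ne_zero.mpr (by positivity)
    rw [Dlen_succ]; omega

lemma Dlen_key (L : ℕ → ℕ) (Kc : ℕ) (hL : ∀ a, 1 ≤ L a) (a : ℕ) :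
    (a + 2) * (Dlen L Kc a + Kc * L (a + 1) + 1) ≤ Dlen L Kc (a + 1) := by
  rw [Dlen_succ]
  calc (a + 2) * (Dlen L Kc a + Kc * L (a + 1) + 1) = crep L Kc a := rfl
  _ ≤ crep L Kc a * L a := Nat.le_mul_of_pos_right _ (hL a)
  _ ≤ _ := Nat.le_add_left _ _

set_option maxHeartbeats 2000000 in
open MeanPayoffAux in
lemma main_aux (q : ℕ → List ℝ) (M r : ℝ)
    (hq : ∀ a, 1 ≤ (q a).length)
    (hMq : ∀ a, ∀ x ∈ q a, |x| ≤ M)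
    (havgq : ∀ a : ℕ, r - 1 / ((a : ℝ) + 1) < (q a).sum / (q a).length) :
    ∃ c : ℕ → ℕ, (∀ a, 1 ≤ c a) ∧
      r ≤ Filter.liminf (fun n : ℕ =>
        (∑ i ∈ Finset.range n, concatSeq q c i) / n) Filter.atTop := by
  classical
  have hM0 : 0 ≤ M := by
    obtain ⟨x, hx⟩ := List.exists_mem_of_length_pos (hq 0)
    exact (abs_nonneg x).trans (hMq 0 x hx)
  set K : ℝ := M + |r| + 1 with hKdef
  set Kc : ℕ := ⌈K⌉₊ with hKcdef
  have hKc : K ≤ (Kc : ℝ) := Nat.le_ceil K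
  set L : ℕ → ℕ := fun a => (q a).length with hLdef
  set c : ℕ → ℕ := crep L Kc with hcdef
  set D : ℕ → ℕ := Dlen L Kc with hDdef
  have hc1 : ∀ a, 1 ≤ c a := fun a => crep_pos L Kc a
  set α : ℕ → ℝ := fun a => r - 1 / ((a : ℝ) + 1) with hαdef
  have hL1 : ∀ a, 1 ≤ L a := hq
  have hαS : ∀ a, α a * (L a : ℝ) ≤ (q a).sum := by
    intro a
    have hLpos : (0 : ℝ) < (L a : ℝ) := by exact_mod_cast hL1 a
    have := havgq a
    have h2 := (lt_div_iff₀ hLpos).mp this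
    exact le_of_lt h2
  have hα_abs : ∀ a, M + |α a| ≤ K := by
    intro a
    have h1 : (0:ℝ) < (a:ℝ) + 1 := by positivity
    have h2 : |α a| ≤ |r| + 1 := by
      rw [hαdef]
      calc |r - 1 / ((a : ℝ) + 1)| ≤ |r| + |1 / ((a:ℝ)+1)| := abs_sub _ _
      _ ≤ |r| + 1 := by
          have : |1 / ((a:ℝ)+1)| = 1/((a:ℝ)+1) := abs_of_pos (by positivity)
          rw [this]
          have : 1/((a:ℝ)+1) ≤ 1 := by
            rw [div_le_one h1]; linarith
          linarith
    rw [hKdef]; linarith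
  set T : ℕ → ℝ := fun n => ∑ i ∈ Finset.range n, concatSeq q c i with hTdef
  have hPlen : ∀ m, (Pp q c m).length = D m := by
    intro m; rw [Pp_length, hDdef, Dlen_eq_sum]
  -- key estimate
  have key : ∀ a n : ℕ, 1 ≤ a → D a ≤ n → n ≤ D (a + 1) →
      r - 4 / (a : ℝ) ≤ T n / n := by
    intro a n ha hDn hnD
    obtain ⟨a', rfl⟩ : ∃ a', a = a' + 1 := ⟨a - 1, by omega⟩
    have hn0 : 0 < n := lt_of_lt_of_le (lt_of_lt_of_le ha (le_Dlen L Kc hL1 _)) hDn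
    have hn0' : (0:ℝ) < (n:ℝ) := by exact_mod_cast hn0
    have hA0 : (0:ℝ) < ((a':ℕ):ℝ) + 1 := by positivity
    -- split the sum
    have hsplit : T n = (Pp q c (a'+1)).sum + ((Fb q c (a'+1)).take (n - D (a'+1))).sum := by
      have h1 : n ≤ (Pp q c (a'+2)).length := by rw [hPlen]; exact hnD
      have h2 := sum_concat q c hq hc1 h1
      rw [hTdef]
      simp only []
      rw [h2, show a' + 2 = (a'+1) + 1 from rfl, Pp_succ, List.take_append,
        hPlen, List.take_of_length_le (by rw [hPlen]; exact hDn), List.sum_append]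
    -- partial block bound
    have hFb : α (a'+1) * ((n:ℝ) - (D (a'+1):ℝ)) - K * (L (a'+1):ℝ)
        ≤ ((Fb q c (a'+1)).take (n - D (a'+1))).sum := by
      have hmle : n - D (a'+1) ≤ c (a'+1) * L (a'+1) := by
        have := Dlen_succ L Kc (a'+1)
        rw [← hDdef, ← hcdef] at this
        omega
      have h3 := take_rep_sum (q (a'+1)) M (α (a'+1)) hM0 (hMq (a'+1)) (hαS (a'+1))
        (c (a'+1)) (n - D (a'+1)) hmle
      have hcast : ((n - D (a'+1) : ℕ) : ℝ) = (n:ℝ) - (D (a'+1):ℝ) :=  by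
        rw [Nat.cast_sub hDn]
      rw [hcast] at h3
      have h4 : K * (L (a'+1):ℝ) ≥ (M + |α (a'+1)|) * (L (a'+1):ℝ) :=
        mul_le_mul_of_nonneg_right (hα_abs _) (Nat.cast_nonneg _)
      calc α (a'+1) * ((n:ℝ) - (D (a'+1):ℝ)) - K * (L (a'+1):ℝ)
          ≤ α (a'+1) * ((n:ℝ) - (D (a'+1):ℝ)) - (M + |α (a'+1)|) * (L (a'+1):ℝ) := by linarith
        _ ≤ _ := h3
    -- full blocks bound
    have hDsum : ∀ m, (D m : ℝ) = ∑ k ∈ Finset.range m, ((c k * L k : ℕ) : ℝ) := by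
      intro m
      rw [hDdef, Dlen_eq_sum]
      push_cast
      rfl
    have hPs : r * (D (a'+1):ℝ) - (D a' : ℝ) - (D (a'+1):ℝ) / ((a':ℝ)+1)
        ≤ (Pp q c (a'+1)).sum := by
      rw [Pp_sum]
      have hterm : ∀ k ∈ Finset.range (a'+1),
          r * ((c k * L k : ℕ):ℝ) - ((c k * L k:ℕ):ℝ)/((k:ℝ)+1) ≤ (c k:ℝ) * (q k).sum := by
        intro k _
        have h1 : (c k:ℝ) * (α k * (L k:ℝ)) ≤ (c k:ℝ) * (q k).sum :=
          mul_le_mul_of_nonneg_left (hαS k) (Nat.cast_nonneg _)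
        have h2 : r * ((c k * L k : ℕ):ℝ) - ((c k * L k:ℕ):ℝ)/((k:ℝ)+1)
            = (c k:ℝ) * (α k * (L k:ℝ)) := by
          have hk0 : ((k:ℝ)+1) ≠ 0 := by positivity
          rw [hαdef]
          push_cast
          field_simp
        rw [h2]; exact h1
      have hsum1 := Finset.sum_le_sum hterm
      rw [Finset.sum_sub_distrib, ← Finset.mul_sum, ← hDsum] at hsum1
      have hsum2 : ∑ k ∈ Finset.range (a'+1), ((c k * L k:ℕ):ℝ)/((k:ℝ)+1)
          ≤ (D a' : ℝ) + (D (a'+1):ℝ)/((a':ℝ)+1) := by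
        rw [Finset.sum_range_succ]
        have hpart1 : ∑ k ∈ Finset.range a', ((c k * L k:ℕ):ℝ)/((k:ℝ)+1) ≤ (D a' : ℝ) := by
          rw [hDsum a']
          apply Finset.sum_le_sum
          intro k _
          exact div_le_self (Nat.cast_nonneg _) (by push_cast; linarith [Nat.cast_nonneg (α := ℝ) k])
        have hcL : ((c a' * L a' : ℕ):ℝ) ≤ (D (a'+1):ℝ) := by
          have h5 := Dlen_succ L Kc a'
          rw [← hDdef, ← hcdef] at h5
          exact_mod_cast (by omega : c a' * L a' ≤ D (a'+1))
        have hpart2 : ((c a' * L a' : ℕ):ℝ)/((a':ℝ)+1) ≤ (D (a'+1):ℝ)/((a':ℝ)+1) := by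
          gcongr
        push_cast at hpart1 hpart2 ⊢
        linarith
      linarith
    -- final arithmetic
    have hDn' : (D (a'+1):ℝ) ≤ (n:ℝ) := by exact_mod_cast hDn
    have hDnn : (0:ℝ) ≤ (D (a'+1):ℝ) := Nat.cast_nonneg _
    have hDa'0 : (0:ℝ) ≤ (D a':ℝ) := Nat.cast_nonneg _
    have hLa0 : (0:ℝ) ≤ (L (a'+1):ℝ) := Nat.cast_nonneg _
    have hkey1 : (((a':ℝ)+1)+1) * ((D a':ℝ) + (Kc:ℝ)*(L (a'+1):ℝ) + 1) ≤ (D (a'+1):ℝ) := by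
      have h7 := Dlen_key L Kc hL1 a'
      rw [← hDdef] at h7
      have h7' : ((a' + 2) * (D a' + Kc * L (a' + 1) + 1) : ℝ) ≤ (D (a'+1) : ℝ) := by
        exact_mod_cast h7
      push_cast at h7'
      linarith
    have hKc0 : (0:ℝ) ≤ (Kc:ℝ) := Nat.cast_nonneg _
    have hK0 : 0 ≤ K := by rw [hKdef]; positivity
    have p1 : (((a':ℝ)+1)+1) * ((D a':ℝ) + (Kc:ℝ)*(L (a'+1):ℝ) + 1) ≤ (n:ℝ) :=
      hkey1.trans hDn'
    have e2 : (D a' : ℝ) ≤ (n:ℝ)/((a':ℝ)+1) := by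
      rw [le_div_iff₀ hA0]
      nlinarith [mul_nonneg hA0.le (mul_nonneg hKc0 hLa0), mul_nonneg hKc0 hLa0,
        mul_nonneg hA0.le hDa'0]
    have e3 : (D (a'+1):ℝ)/((a':ℝ)+1) ≤ (n:ℝ)/((a':ℝ)+1) := by gcongr
    have e4 : K * (L (a'+1):ℝ) ≤ (n:ℝ)/((a':ℝ)+1) := by
      rw [le_div_iff₀ hA0]
      have h8 : K * (L (a'+1):ℝ) ≤ (Kc:ℝ) * (L (a'+1):ℝ) :=
        mul_le_mul_of_nonneg_right hKc hLa0
      nlinarith [mul_le_mul_of_nonneg_right h8 hA0.le,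
        mul_nonneg hA0.le hDa'0, mul_nonneg hKc0 hLa0,
        mul_nonneg hA0.le (mul_nonneg hKc0 hLa0)]
    have e5 : ((n:ℝ) - (D (a'+1):ℝ))/(((a':ℝ)+1)+1) ≤ (n:ℝ)/((a':ℝ)+1) :=
      div_le_div₀ (Nat.cast_nonneg n) (by linarith) hA0 (by linarith)
    have hαexp : r * (n:ℝ) - r * (D (a'+1):ℝ) - (n:ℝ)/((a':ℝ)+1)
        ≤ α (a'+1) * ((n:ℝ) - (D (a'+1):ℝ)) := by
      have h9 : α (a'+1) * ((n:ℝ) - (D (a'+1):ℝ))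
          = r * ((n:ℝ) - (D (a'+1):ℝ)) - ((n:ℝ) - (D (a'+1):ℝ))/(((a':ℝ)+1)+1) := by
        rw [hαdef]; push_cast; ring
      rw [h9]; linarith
    have hTn : r * (n:ℝ) - 4 * ((n:ℝ)/((a':ℝ)+1)) ≤ T n := by
      rw [hsplit]
      have hFb2 : r * (n:ℝ) - r * (D (a'+1):ℝ) - (n:ℝ)/((a':ℝ)+1) - K * (L (a'+1):ℝ)
          ≤ ((Fb q c (a'+1)).take (n - D (a'+1))).sum := by
        refine le_trans ?_ hFb
        have := hαexp
        linarith
      linarith [hPs, hFb2, e2, e3, e4]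
    push_cast
    rw [le_div_iff₀ hn0']
    have hexp : (r - 4/((a':ℝ)+1)) * (n:ℝ) = r * (n:ℝ) - 4 * ((n:ℝ)/((a':ℝ)+1)) := by
      ring
    rw [hexp]
    exact hTn
  -- boundedness of the running averages
  have habs : ∀ i, |concatSeq q c i| ≤ M := by
    intro i
    have hi : i < (Pp q c (i+1)).length :=
      lt_of_lt_of_le (Nat.lt_succ_self i) (le_Pp_length q c hq hc1 (i+1))
    have h1 : concatSeq q c i = (Pp q c (i+1)).getD i 0 := rfl
    rw [h1, List.getD_eq_getElem _ _ hi]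
    have hmem : (Pp q c (i+1))[i] ∈ Pp q c (i+1) := List.getElem_mem hi
    have h2 : ∀ x ∈ Pp q c (i+1), |x| ≤ M := by
      intro x hx
      obtain ⟨l, hl, hxl⟩ := List.mem_flatten.mp hx
      obtain ⟨k, _, rfl⟩ := List.mem_map.mp hl
      obtain ⟨l', hl', hx'⟩ := List.mem_flatten.mp hxl
      rw [List.eq_of_mem_replicate hl'] at hx'
      exact hMq k x hx'
    exact h2 _ hmem
  have hboundf : ∀ n : ℕ, T n / (n:ℝ) ≤ M := by
    intro n
    rcases Nat.eq_zero_or_pos n with h0 | h0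
    · subst h0; simp [hTdef]; exact hM0
    · have hn0' : (0:ℝ) < (n:ℝ) := by exact_mod_cast h0
      have hTle : T n ≤ (n:ℝ) * M := by
        rw [hTdef]
        calc ∑ i ∈ Finset.range n, concatSeq q c i
            ≤ ∑ _i ∈ Finset.range n, M :=
              Finset.sum_le_sum fun i _ => (abs_le.mp (habs i)).2
          _ = (n:ℝ) * M := by rw [Finset.sum_const, Finset.card_range, nsmul_eq_mul]
      rw [div_le_iff₀ hn0']
      linarith
  have hbdd : Filter.IsBoundedUnder (· ≤ ·) Filter.atTop (fun n : ℕ => T n / (n:ℝ)) :=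
    ⟨M, Filter.eventually_map.mpr (Filter.Eventually.of_forall hboundf)⟩
  have hcob : Filter.IsCoboundedUnder (· ≥ ·) Filter.atTop (fun n : ℕ => T n / (n:ℝ)) :=
    Filter.IsBounded.isCobounded_ge hbdd
  have hgoalrw : (fun n : ℕ => (∑ i ∈ Finset.range n, concatSeq q c i) / (n:ℝ))
      = fun n : ℕ => T n / (n:ℝ) := by rw [hTdef]
  refine ⟨c, hc1, ?_⟩
  rw [hgoalrw]
  have heps : ∀ ε : ℝ, 0 < ε →
      r - ε ≤ Filter.liminf (fun n : ℕ => T n / (n:ℝ)) Filter.atTop := by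
    intro ε hε
    set A : ℕ := max 1 ⌈4/ε⌉₊ with hAdef
    have hA1 : 1 ≤ A := le_max_left _ _
    have hA0' : (0:ℝ) < (A:ℝ) := by exact_mod_cast hA1
    have hAε : 4/(A:ℝ) ≤ ε := by
      rw [div_le_iff₀ hA0']
      have h1 : 4/ε ≤ (⌈4/ε⌉₊:ℝ) := Nat.le_ceil _
      have h2 : ((⌈4/ε⌉₊:ℕ):ℝ) ≤ (A:ℝ) := by exact_mod_cast le_max_right 1 ⌈4/ε⌉₊
      calc (4:ℝ) = (4/ε)*ε := by field_simp
      _ ≤ (A:ℝ) * ε := mul_le_mul_of_nonneg_right (h1.trans h2) hε.le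
      _ = ε * (A:ℝ) := mul_comm _ _
    clear_value A
    clear hAdef
    apply Filter.le_liminf_of_le hcob
    filter_upwards [Filter.eventually_ge_atTop (D A)] with n hn
    have hfound : ∃ a : ℕ, A ≤ a ∧ D a ≤ n ∧ n ≤ D (a+1) := by
      have hex : ∃ m, n < D (m+1) := by
        refine ⟨n, lt_of_lt_of_le (Nat.lt_succ_self n) ?_⟩
        rw [hDdef]; exact le_Dlen L Kc hL1 (n+1)
      have ha2 : n < D (Nat.find hex + 1) := Nat.find_spec hex
      refine ⟨Nat.find hex, ?_, ?_, le_of_lt ha2⟩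
      · by_contra h
        push_neg at h
        have hmono : D (Nat.find hex + 1) ≤ D A :=
          Dlen_mono L Kc (by omega)
        omega
      · rcases Nat.eq_zero_or_pos (Nat.find hex) with h0 | h0
        · rw [h0]
          exact Nat.zero_le n
        · have hmin := Nat.find_min hex (show Nat.find hex - 1 < Nat.find hex by omega)
          have heq : Nat.find hex - 1 + 1 = Nat.find hex := by omega
          rw [heq] at hmin
          omega
    obtain ⟨a, ha1, ha3, ha2⟩ := hfound
    have hk := key a n (le_trans hA1 ha1) ha3 ha2
    have ha0' : (0:ℝ) < (a:ℝ) := by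
      have : 1 ≤ a := le_trans hA1 ha1
      exact_mod_cast this
    have h4a : 4/(a:ℝ) ≤ 4/(A:ℝ) := by
      have hca : (A:ℝ) ≤ (a:ℝ) := by exact_mod_cast ha1
      rw [div_le_div_iff₀ ha0' hA0']
      linarith only [hca]
    linarith only [hk, h4a, hAε]
  refine le_of_forall_pos_le_add fun ε hε => ?_
  have := heps ε hε
  linarith

/-- If the blocks `π₁, π₂, …` consist of rewards in `[-M, M]` and the average
reward of block `πₐ` exceeds `r - 1/a`, then there are repetition counts
`b₁, b₂, … ≥ 1` such that the concatenation `π₁^{b₁} π₂^{b₂} …` has mean payoff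
(liminf of running averages) at least `r`. -/
theorem exists_repetitions_meanPayoff_ge (π : ℕ → List ℝ) (M r : ℝ)
    (hne : ∀ a : ℕ, 1 ≤ a → π a ≠ [])
    (hM : ∀ a : ℕ, 1 ≤ a → ∀ x ∈ π a, |x| ≤ M)
    (havg : ∀ a : ℕ, 1 ≤ a → r - 1 / (a : ℝ) < (π a).sum / (π a).length) :
    ∃ b : ℕ → ℕ, (∀ a : ℕ, 1 ≤ a → 1 ≤ b a) ∧
      r ≤ Filter.liminf
        (fun n : ℕ =>
          (∑ i ∈ Finset.range n,
            concatSeq (fun a => π (a + 1)) (fun a => b (a + 1)) i) / n)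
        atTop := by
  have h1 : ∀ a : ℕ, 1 ≤ (π (a+1)).length := fun a =>
    List.length_pos_iff.mpr (hne (a+1) (Nat.le_add_left 1 a))
  have h2 : ∀ a : ℕ, ∀ x ∈ π (a+1), |x| ≤ M := fun a =>
    hM (a+1) (Nat.le_add_left 1 a)
  have h3 : ∀ a : ℕ, r - 1 / ((a:ℝ)+1) < (π (a+1)).sum / (π (a+1)).length := by
    intro a
    have := havg (a+1) (Nat.le_add_left 1 a)
    push_cast at this
    exact this
  obtain ⟨c, hc1, hc2⟩ := main_aux (fun a => π (a+1)) M r h1 h2 h3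
  refine ⟨fun a => c (a - 1), fun a _ => hc1 (a - 1), ?_⟩
  simpa only [Nat.add_sub_cancel] using hc2
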